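/- Let 0 < β ≤ γ be real numbers and let f : (0,∞) × ℝ → ℝ be twice continuously differentiable on the open sector {(r,φ) : 0 < r < 1, 0 < φ < γ}. Write Δf(r,φ) := ∂₁²f(r,φ) + r^{−1}∂₁f(r,φ) + r^{−2}∂₂²f(r,φ) for the Euclidean Laplacian in polar coordinates, and set F(ρ,θ) := f(ρ^{γ/β}, γθ/β). Then ∫₀^1 ∫₀^β ( (β/γ)² ρ^{2−2γ/β} · ΔF(ρ,θ) )² · (γ/β)² ρ^{2γ/β−1} dθ dρ = ∫₀^1 ∫₀^γ ( Δf(r,φ) )² r dφ dr (equality of extended-real-valued integrals). -/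

import Mathlib

open Real MeasureTheory Set

private theorem lintegral_image_eq_lintegral_abs_deriv_mul' {s : Set ℝ} {f f' : ℝ → ℝ}
    (hs : MeasurableSet s) (hf' : ∀ x ∈ s, HasDerivWithinAt f (f' x) s x) (hf : InjOn f s)
    (g : ℝ → ENNReal) :
    ∫⁻ x in f '' s, g x = ∫⁻ x in s, ENNReal.ofReal |f' x| * g (f x) := by
  simpa only [ContinuousLinearMap.det_toSpanSingleton] using
    lintegral_image_eq_lintegral_abs_det_fderiv_mul volume hs
      (fun x hx => (hf' x hx).hasFDerivWithinAt) hf g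

/-- The `H²`-isometry computation (Lemma 2 of the paper):
with `Δf = ∂₁²f + r⁻¹∂₁f + r⁻²∂₂²f` the Euclidean Laplacian in polar coordinates
and `F (ρ,θ) = f (ρ^(γ/β), γθ/β)`,
`∫₀¹∫₀^β ((β/γ)² ρ^(2-2γ/β) ΔF)² (γ/β)² ρ^(2γ/β-1) dθ dρ = ∫₀¹∫₀^γ (Δf)² r dφ dr`. -/
theorem sector_H2_isometry (β γ : ℝ) (hβ : 0 < β) (hβγ : β ≤ γ) (f : ℝ → ℝ → ℝ)
    (hf : ContDiffOn ℝ 2 (fun p : ℝ × ℝ => f p.1 p.2)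
      {p : ℝ × ℝ | 0 < p.1 ∧ p.1 < 1 ∧ 0 < p.2 ∧ p.2 < γ})
    (F : ℝ → ℝ → ℝ) (hF : F = fun ρ θ => f (ρ ^ (γ / β)) (γ * θ / β))
    (lap : (ℝ → ℝ → ℝ) → ℝ → ℝ → ℝ)
    (hlap : lap = fun u r φ =>
      deriv (fun x => deriv (fun x' => u x' φ) x) r
        + r⁻¹ * deriv (fun x => u x φ) r
        + (r ^ 2)⁻¹ * deriv (fun y => deriv (fun y' => u r y') y) φ) :
    ∫⁻ ρ in Ioo (0:ℝ) 1, ∫⁻ θ in Ioo (0:ℝ) β,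
        ENNReal.ofReal
          (((β / γ) ^ 2 * ρ ^ (2 - 2 * γ / β) * lap F ρ θ) ^ 2
            * ((γ / β) ^ 2 * ρ ^ (2 * γ / β - 1)))
      = ∫⁻ r in Ioo (0:ℝ) 1, ∫⁻ φ in Ioo (0:ℝ) γ,
          ENNReal.ofReal ((lap f r φ) ^ 2 * r) := by
  obtain ⟨c, hc_def⟩ : ∃ c : ℝ, c = γ / β := ⟨_, rfl⟩
  have hγ : 0 < γ := lt_of_lt_of_le hβ hβγ
  have hc0 : 0 < c := hc_def ▸ div_pos hγ hβ
  set S : Set (ℝ × ℝ) := {p : ℝ × ℝ | 0 < p.1 ∧ p.1 < 1 ∧ 0 < p.2 ∧ p.2 < γ} with hS_def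
  have hSopen : IsOpen S := by
    have h : S = Ioo (0:ℝ) 1 ×ˢ Ioo (0:ℝ) γ := by
      ext p; simp [hS_def, Set.mem_prod, and_assoc]
    rw [h]; exact isOpen_Ioo.prod isOpen_Ioo
  obtain ⟨D, hD_def⟩ : ∃ D, D = fderiv ℝ (fun p : ℝ × ℝ => f p.1 p.2) := ⟨_, rfl⟩
  obtain ⟨M, hM_def⟩ : ∃ M, M = fderiv ℝ D := ⟨_, rfl⟩
  have hD1 : ∀ p ∈ S, HasFDerivAt (fun p : ℝ × ℝ => f p.1 p.2) (D p) p := by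
    intro p hp
    rw [hD_def]
    exact ((hf.contDiffAt (hSopen.mem_nhds hp)).differentiableAt (by norm_num)).hasFDerivAt
  have hD2 : ∀ p ∈ S, HasFDerivAt D (M p) p := by
    intro p hp
    have h := ((hf.contDiffAt (hSopen.mem_nhds hp)).fderiv_right
      (m := 1) (by norm_num)).differentiableAt (by norm_num)
    rw [hM_def, hD_def]
    exact h.hasFDerivAt
  have slice1 : ∀ r φ : ℝ, (r, φ) ∈ S → HasDerivAt (fun x => f x φ) (D (r, φ) (1, 0)) r := by
    intro r φ hp
    have h := (hD1 (r, φ) hp).comp_hasDerivAt r ((hasDerivAt_id r).prodMk (hasDerivAt_const r φ))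
    simpa [Function.comp_def] using h
  have slice2 : ∀ r φ : ℝ, (r, φ) ∈ S → HasDerivAt (fun y => f r y) (D (r, φ) (0, 1)) φ := by
    intro r φ hp
    have h := (hD1 (r, φ) hp).comp_hasDerivAt φ ((hasDerivAt_const φ r).prodMk (hasDerivAt_id φ))
    simpa [Function.comp_def] using h
  have memS : ∀ x y : ℝ, x ∈ Ioo (0:ℝ) 1 → y ∈ Ioo (0:ℝ) β → ((x ^ c : ℝ), γ * y / β) ∈ S := by
    intro x y hx hy
    refine ⟨Real.rpow_pos_of_pos hx.1 c, Real.rpow_lt_one hx.1.le hx.2 hc0,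
      div_pos (mul_pos hγ hy.1) hβ, ?_⟩
    rw [div_lt_iff₀ hβ]
    exact (mul_lt_mul_iff_right₀ hγ).2 hy.2
  have hΨd : ∀ y : ℝ, HasDerivAt (fun t : ℝ => γ * t / β) c y := by
    intro y
    have h := ((hasDerivAt_id y).const_mul γ).div_const β
    simpa [hc_def] using h
  -- the key pointwise chain-rule identity
  have key : ∀ ρ ∈ Ioo (0:ℝ) 1, ∀ θ ∈ Ioo (0:ℝ) β,
      (β / γ) ^ 2 * ρ ^ (2 - 2 * γ / β) * lap F ρ θ = lap f (ρ ^ c) (γ * θ / β) := by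
    intro ρ hρ θ hθ
    have hρ0 : 0 < ρ := hρ.1
    have hq : ((ρ ^ c : ℝ), γ * θ / β) ∈ S := memS ρ θ hρ hθ
    -- f-side partial derivatives
    have e1 : deriv (fun x => f x (γ * θ / β)) (ρ ^ c) = D (ρ ^ c, γ * θ / β) (1, 0) :=
      (slice1 _ _ hq).deriv
    have hU1 : IsOpen {x : ℝ | (x, γ * θ / β) ∈ S} :=
      hSopen.preimage (continuous_id.prodMk continuous_const)
    have hDslice1 : HasDerivAt (fun x => D (x, γ * θ / β)) (M (ρ ^ c, γ * θ / β) (1, 0)) (ρ ^ c) := by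
      have h := (hD2 _ hq).comp_hasDerivAt (ρ ^ c)
        ((hasDerivAt_id (ρ ^ c)).prodMk (hasDerivAt_const (ρ ^ c) (γ * θ / β)))
      simpa [Function.comp_def] using h
    have e2 : deriv (fun x => deriv (fun x' => f x' (γ * θ / β)) x) (ρ ^ c)
        = M (ρ ^ c, γ * θ / β) (1, 0) (1, 0) := by
      have ev : (fun x => deriv (fun x' => f x' (γ * θ / β)) x)
          =ᶠ[nhds (ρ ^ c)] fun x => D (x, γ * θ / β) (1, 0) :=
        Filter.eventuallyEq_of_mem (hU1.mem_nhds hq) fun x hx => (slice1 x _ hx).deriv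
      rw [ev.deriv_eq]
      have h2 : HasDerivAt (fun x => D (x, γ * θ / β) (1, 0))
          (M (ρ ^ c, γ * θ / β) (1, 0) (1, 0)) (ρ ^ c) := by
        simpa using hDslice1.clm_apply (hasDerivAt_const (ρ ^ c) ((1:ℝ), (0:ℝ)))
      exact h2.deriv
    have hU2 : IsOpen {y : ℝ | ((ρ ^ c : ℝ), y) ∈ S} :=
      hSopen.preimage (continuous_const.prodMk continuous_id)
    have hDslice2 : HasDerivAt (fun y => D (ρ ^ c, y)) (M (ρ ^ c, γ * θ / β) (0, 1)) (γ * θ / β) := by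
      have h := (hD2 _ hq).comp_hasDerivAt (γ * θ / β)
        ((hasDerivAt_const (γ * θ / β) (ρ ^ c : ℝ)).prodMk (hasDerivAt_id (γ * θ / β)))
      simpa [Function.comp_def] using h
    have e3 : deriv (fun y => deriv (fun y' => f (ρ ^ c) y') y) (γ * θ / β)
        = M (ρ ^ c, γ * θ / β) (0, 1) (0, 1) := by
      have ev : (fun y => deriv (fun y' => f (ρ ^ c) y') y)
          =ᶠ[nhds (γ * θ / β)] fun y => D (ρ ^ c, y) (0, 1) :=
        Filter.eventuallyEq_of_mem (hU2.mem_nhds hq) fun y hy => (slice2 _ y hy).deriv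
      rw [ev.deriv_eq]
      have h2 : HasDerivAt (fun y => D (ρ ^ c, y) (0, 1))
          (M (ρ ^ c, γ * θ / β) (0, 1) (0, 1)) (γ * θ / β) := by
        simpa using hDslice2.clm_apply (hasDerivAt_const (γ * θ / β) ((0:ℝ), (1:ℝ)))
      exact h2.deriv
    -- F-side partial derivatives
    have hrpowd : ∀ x : ℝ, x ∈ Ioo (0:ℝ) 1 → HasDerivAt (fun t : ℝ => t ^ c) (c * x ^ (c - 1)) x :=
      fun x hx => Real.hasDerivAt_rpow_const (Or.inl hx.1.ne')
    have hΦ : ∀ x : ℝ, x ∈ Ioo (0:ℝ) 1 →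
        HasDerivAt (fun t : ℝ => ((t ^ c : ℝ), γ * θ / β)) ((c * x ^ (c - 1), 0) : ℝ × ℝ) x :=
      fun x hx => (hrpowd x hx).prodMk (hasDerivAt_const x _)
    have F1 : ∀ x, x ∈ Ioo (0:ℝ) 1 →
        HasDerivAt (fun t => f (t ^ c) (γ * θ / β)) (D (x ^ c, γ * θ / β) (c * x ^ (c - 1), 0)) x := by
      intro x hx
      have h := (hD1 _ (memS x θ hx hθ)).comp_hasDerivAt x (hΦ x hx)
      simpa [Function.comp_def] using h
    have eF1 : deriv (fun x => f (x ^ c) (γ * θ / β)) ρ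
        = D (ρ ^ c, γ * θ / β) (c * ρ ^ (c - 1), 0) := (F1 ρ hρ).deriv
    have hDmap : HasDerivAt (fun x => D (x ^ c, γ * θ / β))
        (M (ρ ^ c, γ * θ / β) (c * ρ ^ (c - 1), 0)) ρ := by
      have h := (hD2 _ hq).comp_hasDerivAt ρ (hΦ ρ hρ)
      simpa [Function.comp_def] using h
    have hu : HasDerivAt (fun x : ℝ => ((c * x ^ (c - 1), 0) : ℝ × ℝ))
        ((c * ((c - 1) * ρ ^ (c - 2)), 0) : ℝ × ℝ) ρ := by
      have h1 : HasDerivAt (fun x : ℝ => c * x ^ (c - 1)) (c * ((c - 1) * ρ ^ (c - 1 - 1))) ρ :=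
        (Real.hasDerivAt_rpow_const (Or.inl hρ0.ne')).const_mul c
      rw [show c - 1 - 1 = c - 2 by ring] at h1
      exact h1.prodMk (hasDerivAt_const ρ (0:ℝ))
    have eF2 : deriv (fun x => deriv (fun x' => f (x' ^ c) (γ * θ / β)) x) ρ
        = M (ρ ^ c, γ * θ / β) (c * ρ ^ (c - 1), 0) (c * ρ ^ (c - 1), 0)
          + D (ρ ^ c, γ * θ / β) (c * ((c - 1) * ρ ^ (c - 2)), 0) := by
      have ev : (fun x => deriv (fun x' => f (x' ^ c) (γ * θ / β)) x)
          =ᶠ[nhds ρ] fun x => D (x ^ c, γ * θ / β) (c * x ^ (c - 1), 0) :=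
        Filter.eventuallyEq_of_mem (isOpen_Ioo.mem_nhds hρ) fun x hx => (F1 x hx).deriv
      rw [ev.deriv_eq]
      exact (hDmap.clm_apply hu).deriv
    have hΨ : ∀ y : ℝ, HasDerivAt (fun t : ℝ => ((ρ ^ c : ℝ), γ * t / β)) (((0:ℝ), c) : ℝ × ℝ) y :=
      fun y => (hasDerivAt_const y _).prodMk (hΨd y)
    have F2 : ∀ y, y ∈ Ioo (0:ℝ) β →
        HasDerivAt (fun t => f (ρ ^ c) (γ * t / β)) (D (ρ ^ c, γ * y / β) (0, c)) y := by
      intro y hy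
      have h := (hD1 _ (memS ρ y hρ hy)).comp_hasDerivAt y (hΨ y)
      simpa [Function.comp_def] using h
    have hDmap2 : HasDerivAt (fun y => D (ρ ^ c, γ * y / β)) (M (ρ ^ c, γ * θ / β) (0, c)) θ := by
      have h := (hD2 _ hq).comp_hasDerivAt θ (hΨ θ)
      simpa [Function.comp_def] using h
    have eG2 : deriv (fun y => deriv (fun y' => f (ρ ^ c) (γ * y' / β)) y) θ
        = M (ρ ^ c, γ * θ / β) (0, c) (0, c) := by
      have ev : (fun y => deriv (fun y' => f (ρ ^ c) (γ * y' / β)) y)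
          =ᶠ[nhds θ] fun y => D (ρ ^ c, γ * y / β) (0, c) :=
        Filter.eventuallyEq_of_mem (isOpen_Ioo.mem_nhds hθ) fun y hy => (F2 y hy).deriv
      rw [ev.deriv_eq]
      have h2 : HasDerivAt (fun y => D (ρ ^ c, γ * y / β) (0, c))
          (M (ρ ^ c, γ * θ / β) (0, c) (0, c)) θ := by
        simpa using hDmap2.clm_apply (hasDerivAt_const θ ((0:ℝ), c))
      exact h2.deriv
    -- reduce bilinear applications to basis values
    have hDsmul : ∀ s : ℝ, D (ρ ^ c, γ * θ / β) (s, 0) = s * D (ρ ^ c, γ * θ / β) (1, 0) := by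
      intro s
      have h : ((s, (0:ℝ)) : ℝ × ℝ) = s • ((1:ℝ), (0:ℝ)) := by simp
      rw [h, _root_.map_smul, smul_eq_mul]
    have hMsmul1 : ∀ s t : ℝ, M (ρ ^ c, γ * θ / β) (s, 0) (t, 0)
        = s * t * M (ρ ^ c, γ * θ / β) (1, 0) (1, 0) := by
      intro s t
      have h1 : ((s, (0:ℝ)) : ℝ × ℝ) = s • ((1:ℝ), (0:ℝ)) := by simp
      have h2 : ((t, (0:ℝ)) : ℝ × ℝ) = t • ((1:ℝ), (0:ℝ)) := by simp
      rw [h1, h2]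
      simp only [_root_.map_smul, ContinuousLinearMap.smul_apply, smul_eq_mul]
      ring
    have hMsmul2 : ∀ s t : ℝ, M (ρ ^ c, γ * θ / β) (0, s) (0, t)
        = s * t * M (ρ ^ c, γ * θ / β) (0, 1) (0, 1) := by
      intro s t
      have h1 : (((0:ℝ), s) : ℝ × ℝ) = s • ((0:ℝ), (1:ℝ)) := by simp
      have h2 : (((0:ℝ), t) : ℝ × ℝ) = t • ((0:ℝ), (1:ℝ)) := by simp
      rw [h1, h2]
      simp only [_root_.map_smul, ContinuousLinearMap.smul_apply, smul_eq_mul]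
      ring
    -- assemble
    simp only [hlap, hF]
    rw [← hc_def]
    rw [e1, e2, e3, eF1, eF2, eG2]
    rw [hMsmul1 (c * ρ ^ (c - 1)) (c * ρ ^ (c - 1)), hMsmul2 c c,
      hDsmul (c * ρ ^ (c - 1)), hDsmul (c * ((c - 1) * ρ ^ (c - 2)))]
    -- now a scalar identity in rpow's
    have hρc : (0:ℝ) < ρ ^ c := Real.rpow_pos_of_pos hρ0 c
    have h1 : ρ ^ (c - 1) = ρ ^ c / ρ := by
      rw [Real.rpow_sub hρ0, Real.rpow_one]
    have h2 : ρ ^ (c - 2) = ρ ^ c / ρ ^ (2:ℕ) := by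
      rw [Real.rpow_sub hρ0, show (2:ℝ) = ((2:ℕ):ℝ) by norm_num, Real.rpow_natCast]
    have h3 : ρ ^ (2 - 2 * γ / β) = ρ ^ (2:ℕ) / (ρ ^ c * ρ ^ c) := by
      rw [show (2 - 2 * γ / β : ℝ) = 2 - (c + c) by rw [hc_def]; ring,
        Real.rpow_sub hρ0, Real.rpow_add hρ0, show (2:ℝ) = ((2:ℕ):ℝ) by norm_num,
        Real.rpow_natCast]
    have hbγ : β / γ = c⁻¹ := by rw [hc_def, inv_div]
    rw [h1, h2, h3, hbγ]
    field_simp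
    ring
  -- change of variables on the right-hand side
  have hder1 : ∀ ρ ∈ Ioo (0:ℝ) 1,
      HasDerivWithinAt (fun t : ℝ => t ^ c) (c * ρ ^ (c - 1)) (Ioo (0:ℝ) 1) ρ :=
    fun ρ hρ => (Real.hasDerivAt_rpow_const (Or.inl hρ.1.ne')).hasDerivWithinAt
  have hinj1 : InjOn (fun t : ℝ => t ^ c) (Ioo (0:ℝ) 1) := by
    have hmono : StrictMonoOn (fun t : ℝ => t ^ c) (Ioo (0:ℝ) 1) :=
      fun a ha b hb hab => Real.rpow_lt_rpow ha.1.le hab hc0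
    exact hmono.injOn
  have him1 : (fun t : ℝ => t ^ c) '' Ioo (0:ℝ) 1 = Ioo (0:ℝ) 1 := by
    ext y
    simp only [mem_image, mem_Ioo]
    constructor
    · rintro ⟨x, ⟨hx0, hx1⟩, rfl⟩
      exact ⟨Real.rpow_pos_of_pos hx0 c, Real.rpow_lt_one hx0.le hx1 hc0⟩
    · rintro ⟨hy0, hy1⟩
      exact ⟨y ^ c⁻¹, ⟨Real.rpow_pos_of_pos hy0 _,
        Real.rpow_lt_one hy0.le hy1 (by positivity)⟩, Real.rpow_inv_rpow hy0.le hc0.ne'⟩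
  have hinj2 : InjOn (fun θ : ℝ => γ * θ / β) (Ioo (0:ℝ) β) := by
    intro a _ b _ h
    dsimp only at h
    field_simp at h
    exact h
  have him2 : (fun θ : ℝ => γ * θ / β) '' Ioo (0:ℝ) β = Ioo (0:ℝ) γ := by
    ext y
    simp only [mem_image, mem_Ioo]
    constructor
    · rintro ⟨x, ⟨hx0, hx1⟩, rfl⟩
      exact ⟨by positivity, by rw [div_lt_iff₀ hβ]; exact (mul_lt_mul_iff_right₀ hγ).2 hx1⟩
    · rintro ⟨hy0, hy1⟩
      refine ⟨β * y / γ, ⟨by positivity, ?_⟩, ?_⟩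
      · rw [div_lt_iff₀ hγ]; exact (mul_lt_mul_iff_right₀ hβ).2 hy1
      · field_simp
  have hsub2 : ∀ r : ℝ,
      (∫⁻ φ in Ioo (0:ℝ) γ, ENNReal.ofReal ((lap f r φ) ^ 2 * r))
        = ∫⁻ θ in Ioo (0:ℝ) β,
            ENNReal.ofReal c * ENNReal.ofReal ((lap f r (γ * θ / β)) ^ 2 * r) := by
    intro r
    rw [← him2, lintegral_image_eq_lintegral_abs_deriv_mul' measurableSet_Ioo
      (f' := fun _ => c) (fun y _ => (hΨd y).hasDerivWithinAt) hinj2]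
    simp only [abs_of_pos hc0]
  have hRHS1 : (∫⁻ r in Ioo (0:ℝ) 1, ∫⁻ φ in Ioo (0:ℝ) γ, ENNReal.ofReal ((lap f r φ) ^ 2 * r))
      = ∫⁻ ρ in Ioo (0:ℝ) 1, ENNReal.ofReal |c * ρ ^ (c - 1)| *
          ∫⁻ φ in Ioo (0:ℝ) γ, ENNReal.ofReal ((lap f (ρ ^ c) φ) ^ 2 * ρ ^ c) := by
    conv_lhs => rw [← him1]
    exact lintegral_image_eq_lintegral_abs_deriv_mul' measurableSet_Ioo hder1 hinj1
      (fun r => ∫⁻ φ in Ioo (0:ℝ) γ, ENNReal.ofReal ((lap f r φ) ^ 2 * r))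
  rw [hRHS1]
  refine setLIntegral_congr_fun_ae measurableSet_Ioo (ae_of_all _ ?_)
  intro ρ hρ
  rw [hsub2 (ρ ^ c), ← lintegral_const_mul' _ _ ENNReal.ofReal_ne_top]
  refine setLIntegral_congr_fun_ae measurableSet_Ioo (ae_of_all _ ?_)
  intro θ hθ
  rw [key ρ hρ θ hθ]
  rw [abs_of_pos (mul_pos hc0 (Real.rpow_pos_of_pos hρ.1 _))]
  rw [← ENNReal.ofReal_mul hc0.le, ← ENNReal.ofReal_mul
    (mul_pos hc0 (Real.rpow_pos_of_pos hρ.1 _)).le]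
  congr 1
  rw [← hc_def]
  rw [show (2 * γ / β - 1 : ℝ) = (c - 1) + c by rw [hc_def]; ring, Real.rpow_add hρ.1]
  ring
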